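/- Fixed point error bound under projection: let Π be an orthogonal projection onto a closed subspace of a Hilbert space, and let F be a γ-contraction (γ ∈ (0,1)) with fixed point Q*. If Φr* is a fixed point of Π∘F, then ‖Φr* − Q*‖ ≤ (1 − γ²)^{−1/2} ‖ΠQ* − Q*‖. -/

import Mathlib

open scoped RealInnerProductSpace


/-- Fixed point error bound under projection: let `Π` be the orthogonal projection onto a closed
subspace `K` of a real Hilbert space, and let `F` be a `γ`-contraction (`γ ∈ (0,1)`) with fixed
point `Q*`. If `Φr* ∈ K` is a fixed point of `Π ∘ F`, then
`‖Φr* − Q*‖ ≤ (1 − γ²)^{−1/2} ‖ΠQ* − Q*‖`. -/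
theorem stmt_11 {H : Type*} [NormedAddCommGroup H] [InnerProductSpace ℝ H] [CompleteSpace H]
    (K : Submodule ℝ H) [CompleteSpace K]
    (F : H → H) (γ : ℝ) (hγ0 : 0 < γ) (hγ1 : γ < 1)
    (hF : ∀ Q Q' : H, ‖F Q - F Q'‖ ≤ γ * ‖Q - Q'‖)
    (Qstar : H) (hQstar : F Qstar = Qstar)
    (Φr : H) (hΦr : Φr ∈ K)
    (hfix : ((K.orthogonalProjection (F Φr) : K) : H) = Φr) :
    ‖Φr - Qstar‖ ≤
      (Real.sqrt (1 - γ ^ 2))⁻¹ *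
        ‖((K.orthogonalProjection Qstar : K) : H) - Qstar‖ := by
  set P := K.orthogonalProjection
  set a := ‖Φr - Qstar‖ with ha
  set b := ‖((P Qstar : K) : H) - Qstar‖ with hb
  set c := ‖Φr - ((P Qstar : K) : H)‖ with hc
  -- c ≤ γ * a : projection is nonexpansive and F is a contraction
  have hcle : c ≤ γ * a := by
    have h1 : Φr - ((P Qstar : K) : H) = ((P (F Φr) : K) : H) - ((P (F Qstar) : K) : H) := by
      rw [hfix, hQstar]
    have h2 : ((P (F Φr) : K) : H) - ((P (F Qstar) : K) : H)
        = ((P (F Φr) - P (F Qstar) : K) : H) := rfl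
    have h3 : ‖(P (F Φr) - P (F Qstar) : K)‖ ≤ ‖F Φr - F Qstar‖ := by
      rw [← map_sub]
      exact (P.le_opNorm _).trans
        (mul_le_of_le_one_left (norm_nonneg _) (Submodule.orthogonalProjectionOnto_norm_le K))
    calc c = ‖(P (F Φr) - P (F Qstar) : K)‖ := by
            rw [hc, h1, h2]; exact (Submodule.norm_coe _)
      _ ≤ ‖F Φr - F Qstar‖ := h3
      _ ≤ γ * ‖Φr - Qstar‖ := hF _ _
  -- Pythagoras: a² = c² + b²
  have horth : (inner ℝ (Φr - ((P Qstar : K) : H)) (((P Qstar : K) : H) - Qstar) : ℝ) = 0 := by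
    have hmem : Φr - ((P Qstar : K) : H) ∈ K := K.sub_mem hΦr (P Qstar).2
    have hperp : Qstar - ((P Qstar : K) : H) ∈ Kᗮ :=
      K.sub_starProjection_mem_orthogonal Qstar
    have h0 : (inner ℝ (Φr - ((P Qstar : K) : H)) (Qstar - ((P Qstar : K) : H)) : ℝ) = 0 :=
      hperp _ hmem
    calc (inner ℝ (Φr - ((P Qstar : K) : H)) (((P Qstar : K) : H) - Qstar) : ℝ)
        = -(inner ℝ (Φr - ((P Qstar : K) : H)) (Qstar - ((P Qstar : K) : H)) : ℝ) := by
          rw [← inner_neg_right, neg_sub]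
      _ = 0 := by rw [h0, neg_zero]
  have hpyth : a ^ 2 = c ^ 2 + b ^ 2 := by
    have hsum : Φr - Qstar = (Φr - ((P Qstar : K) : H)) + (((P Qstar : K) : H) - Qstar) := by
      abel
    rw [ha, hsum]
    rw [@norm_add_sq_real]
    rw [horth]
    ring
  -- finish
  have hs : (0:ℝ) < Real.sqrt (1 - γ ^ 2) := Real.sqrt_pos.mpr (by nlinarith)
  have hs2 : Real.sqrt (1 - γ ^ 2) ^ 2 = 1 - γ ^ 2 := Real.sq_sqrt (by nlinarith)
  have key : Real.sqrt (1 - γ ^ 2) * a ≤ b := by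
    nlinarith [norm_nonneg (Φr - Qstar), norm_nonneg (((P Qstar : K) : H) - Qstar),
      norm_nonneg (Φr - ((P Qstar : K) : H)), sq_nonneg (Real.sqrt (1 - γ ^ 2) * a + b), hs.le, mul_nonneg hs.le (norm_nonneg (Φr - Qstar))]
  calc a = (Real.sqrt (1 - γ ^ 2))⁻¹ * (Real.sqrt (1 - γ ^ 2) * a) := by
        field_simp
    _ ≤ (Real.sqrt (1 - γ ^ 2))⁻¹ * b := by
        apply mul_le_mul_of_nonneg_left key (by positivity)
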